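/- Let κ be a regular cardinal and μ a (κ,κ⁺)-cardinal. For every α < κ⁺, the μ-sequence (μ_ξ(α))_{ξ<ht(μ)} is a non-decreasing continuous (at limit stages, the term is the union of the preceding terms) sequence of subsets of α whose union equals α; it is a closed unbounded subset of [α]^{<κ}; and the height ht(μ) of (μ,⊂) equals κ. -/

import Mathlib

open Set Cardinal Ordinal

noncomputable section

/-- Lower a (small) ordinal of `Ordinal.{1}` to `Ordinal.{0}` (the inverse of `Ordinal.lift`
on its range). -/
noncomputable def olower (o : Ordinal.{1}) : Ordinal.{0} :=
  sInf {a : Ordinal.{0} | Ordinal.lift.{1} a = o}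

/-- The order type of a set of ordinals. -/
noncomputable def otp (A : Set Ordinal.{0}) : Ordinal.{0} :=
  olower (Ordinal.type (Subrel ((· < ·) : Ordinal → Ordinal → Prop) (· ∈ A)))

/-- The canonical order-preserving transfer map from a set of ordinals `X` to a set of
ordinals `Y` of the same order type: an element `a ∈ X` is sent to the unique element of `Y`
occupying the same position. -/
noncomputable def omap (X Y : Set Ordinal) (a : Ordinal) : Ordinal :=
  sInf {b | b ∈ Y ∧ otp (Y ∩ Set.Iio b) = otp (X ∩ Set.Iio a)}

/-- `IsStar X₁ X₂ X` says `X = X₁ * X₂`: `X₁` and `X₂` have the same order type,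
`X = X₁ ∪ X₂`, and `X₁ ∩ X₂ < X₁ \ X₂ < X₂ \ X₁` elementwise. -/
def IsStar (X₁ X₂ X : Set Ordinal) : Prop :=
  otp X₁ = otp X₂ ∧ X = X₁ ∪ X₂ ∧
  (∀ a ∈ X₁ ∩ X₂, ∀ b ∈ X₁ \ X₂, a < b) ∧
  (∀ b ∈ X₁ \ X₂, ∀ c ∈ X₂ \ X₁, b < c)

set_option linter.deprecated false in
/-- A `(κ,κ⁺)`-cardinal (a neat simplified `(κ,1)`-morass presented as a family of sets):
a family `μ ⊆ ℘_κ(κ⁺)` which is well-founded under strict inclusion, locally small,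
homogeneous, directed, locally almost directed, covers `κ⁺` and is neat. -/
structure TwoCardinal (κ : Cardinal.{0}) where
  mu : Set (Set Ordinal)
  mem_sub : ∀ X ∈ mu, X ⊆ Set.Iio (Order.succ κ).ord
  mem_small : ∀ X ∈ mu, (otp X).card < κ
  wf : WellFounded fun X Y : mu => (X : Set Ordinal) ⊂ (Y : Set Ordinal)
  locSmall : ∀ X : mu,
    #{Z : mu // (Z : Set Ordinal) ⊂ (X : Set Ordinal)} < Cardinal.lift.{1} κ
  homog : ∀ X Y : mu, (wf.apply X).rank = (wf.apply Y).rank →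
    otp (X : Set Ordinal) = otp (Y : Set Ordinal) ∧
    {Z | Z ∈ mu ∧ Z ⊂ (Y : Set Ordinal)} =
      (fun Z => omap (X : Set Ordinal) (Y : Set Ordinal) '' Z) ''
        {Z | Z ∈ mu ∧ Z ⊂ (X : Set Ordinal)}
  directed : ∀ X ∈ mu, ∀ Y ∈ mu, ∃ Z ∈ mu, X ⊆ Z ∧ Y ⊆ Z
  locAlmostDirected : ∀ X : mu,
    (∀ Z₁ ∈ mu, ∀ Z₂ ∈ mu, Z₁ ⊂ (X : Set Ordinal) → Z₂ ⊂ (X : Set Ordinal) →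
      ∃ Z ∈ mu, Z ⊂ (X : Set Ordinal) ∧ Z₁ ⊆ Z ∧ Z₂ ⊆ Z) ∨
    (∃ X₁ X₂ : mu, (wf.apply X₁).rank = (wf.apply X₂).rank ∧
      IsStar (X₁ : Set Ordinal) (X₂ : Set Ordinal) (X : Set Ordinal) ∧
      {Z | Z ∈ mu ∧ Z ⊂ (X : Set Ordinal)} =
        {Z | Z ∈ mu ∧ Z ⊂ (X₁ : Set Ordinal)} ∪ {Z | Z ∈ mu ∧ Z ⊂ (X₂ : Set Ordinal)} ∪
          {(X₁ : Set Ordinal), (X₂ : Set Ordinal)})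
  covers : ⋃₀ mu = Set.Iio (Order.succ κ).ord
  neat : ∀ X : mu, (wf.apply X).rank ≠ 0 →
    (X : Set Ordinal) = ⋃₀ {Z | Z ∈ mu ∧ Z ⊂ (X : Set Ordinal)}

namespace TwoCardinal

variable {κ : Cardinal} (M : TwoCardinal κ)

set_option linter.deprecated false in
/-- The rank of an element of `μ` in the well-founded order `(μ, ⊂)`. -/
noncomputable def rank (X : M.mu) : Ordinal := olower ((M.wf.apply X).rank)

/-- The height of the well-founded order `(μ, ⊂)`. -/
noncomputable def ht : Ordinal := sSup (Set.range fun X : M.mu => M.rank X + 1)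

/-- The term `μ_ξ(α)` of the μ-sequence at `α`: equal to `X ∩ α` for any `X ∈ μ` of
rank `ξ` containing `α` (this is independent of the choice of `X`). -/
noncomputable def seq (α ξ : Ordinal) : Set Ordinal :=
  ⋃₀ {S | ∃ X : M.mu, M.rank X = ξ ∧ α ∈ (X : Set Ordinal) ∧
    S = (X : Set Ordinal) ∩ Set.Iio α}

/-- The μ-coloring `m(α,β) = min{rank X : α, β ∈ X ∈ μ}`. -/
noncomputable def mcol (a b : Ordinal) : Ordinal :=
  sInf {ξ | ∃ X : M.mu, M.rank X = ξ ∧ a ∈ (X : Set Ordinal) ∧ b ∈ (X : Set Ordinal)}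

end TwoCardinal


section Aux

set_option linter.deprecated false

open Ordinal

/-! ### olower and otp infrastructure -/

theorem olower_lift (a : Ordinal.{0}) : olower (Ordinal.lift.{1} a) = a := by
  have h : {b : Ordinal.{0} | Ordinal.lift.{1} b = Ordinal.lift.{1} a} = {a} := by
    ext b; simp [Ordinal.lift_inj]
  rw [olower, h, csInf_singleton]

theorem lift_olower {o : Ordinal.{1}} (h : ∃ a : Ordinal.{0}, Ordinal.lift.{1} a = o) :
    Ordinal.lift.{1} (olower o) = o := by
  obtain ⟨a, rfl⟩ := h; rw [olower_lift]

/-- Boundedness predicate for sets of ordinals. -/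
def OBdd (A : Set Ordinal.{0}) : Prop := ∃ b, A ⊆ Set.Iio b

theorem OBdd.mono {A B : Set Ordinal.{0}} (h : A ⊆ B) (hB : OBdd B) : OBdd A :=
  ⟨hB.choose, h.trans hB.choose_spec⟩

theorem type_le_lift {A : Set Ordinal.{0}} {b : Ordinal.{0}} (h : A ⊆ Set.Iio b) :
    Ordinal.type (Subrel ((· < ·) : Ordinal → Ordinal → Prop) (· ∈ A)) ≤ Ordinal.lift.{1} b := by
  have e : Ordinal.type (Subrel ((· < ·) : Ordinal → Ordinal → Prop) (· ∈ Set.Iio b)) =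
      Ordinal.lift.{1} b := by
    rw [← typein_ordinal b]; rfl
  rw [← e]
  exact RelEmbedding.ordinal_type_le
    ⟨⟨Set.inclusion h, Set.inclusion_injective h⟩, Iff.rfl⟩

theorem lift_otp {A : Set Ordinal.{0}} (h : OBdd A) :
    Ordinal.lift.{1} (otp A) = Ordinal.type (Subrel ((· < ·) : Ordinal → Ordinal → Prop) (· ∈ A)) := by
  obtain ⟨b, hb⟩ := h
  exact lift_olower (Ordinal.mem_range_lift_of_le (type_le_lift hb))

theorem otp_mono {A B : Set Ordinal.{0}} (hAB : A ⊆ B) (h : OBdd B) : otp A ≤ otp B := by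
  rw [← Ordinal.lift_le.{1}, lift_otp (OBdd.mono hAB h), lift_otp h]
  exact RelEmbedding.ordinal_type_le
    ⟨⟨Set.inclusion hAB, Set.inclusion_injective hAB⟩, Iff.rfl⟩

theorem mk_eq_lift_otp {A : Set Ordinal.{0}} (h : OBdd A) :
    Cardinal.mk A = Cardinal.lift.{1} (otp A).card := by
  have h2 := congrArg Ordinal.card (lift_otp h)
  rw [← Ordinal.lift_card, Ordinal.card_type] at h2
  exact h2.symm

theorem otp_empty : otp (∅ : Set Ordinal.{0}) = 0 := by
  have h : Ordinal.lift.{1} (otp (∅ : Set Ordinal.{0})) = Ordinal.lift.{1} (0 : Ordinal.{0}) := by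
    rw [lift_otp ⟨0, Set.empty_subset _⟩, Ordinal.lift_zero]
    exact Ordinal.type_eq_zero_of_empty _
  exact Ordinal.lift_inj.1 h

theorem lift_otp_inter_Iio {A : Set Ordinal.{0}} {a : Ordinal} (ha : a ∈ A) :
    Ordinal.lift.{1} (otp (A ∩ Set.Iio a)) =
      typein (Subrel ((· < ·) : Ordinal → Ordinal → Prop) (· ∈ A)) ⟨a, ha⟩ := by
  rw [lift_otp ⟨a, Set.inter_subset_right⟩, ← type_subrel]
  refine Ordinal.type_eq.2 ⟨⟨⟨fun x => ⟨⟨x.1, x.2.1⟩, x.2.2⟩,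
    fun y => ⟨y.1.1, y.1.2, y.2⟩, fun x => rfl, fun y => rfl⟩, Iff.rfl⟩⟩

theorem otp_inter_lt {A : Set Ordinal.{0}} {a : Ordinal} (ha : a ∈ A) (h : OBdd A) :
    otp (A ∩ Set.Iio a) < otp A := by
  rw [← Ordinal.lift_lt.{1}, lift_otp_inter_Iio ha, lift_otp h]
  exact typein_lt_type _ _

theorem otp_inter_injOn {A : Set Ordinal.{0}} {a b : Ordinal} (ha : a ∈ A) (hb : b ∈ A)
    (he : otp (A ∩ Set.Iio a) = otp (A ∩ Set.Iio b)) : a = b := by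
  have h2 := congrArg (Ordinal.lift.{1}) he
  rw [lift_otp_inter_Iio ha, lift_otp_inter_Iio hb] at h2
  exact congrArg Subtype.val (typein_injective _ h2)

theorem otp_inter_surj {A : Set Ordinal.{0}} (h : OBdd A) {z : Ordinal} (hz : z < otp A) :
    ∃ a ∈ A, otp (A ∩ Set.Iio a) = z := by
  have h2 : Ordinal.lift.{1} z < Ordinal.type (Subrel ((· < ·) : Ordinal → Ordinal → Prop) (· ∈ A)) := by
    rw [← lift_otp h]; exact Ordinal.lift_lt.2 hz
  obtain ⟨⟨a, ha⟩, e⟩ := typein_surj _ h2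
  refine ⟨a, ha, Ordinal.lift_inj.1 ?_⟩
  rw [lift_otp_inter_Iio ha, e]

/-! ### omap infrastructure -/

theorem omap_spec {X Y : Set Ordinal.{0}} (hX : OBdd X) (hY : OBdd Y) (hotp : otp X = otp Y)
    {a : Ordinal} (ha : a ∈ X) :
    omap X Y a ∈ Y ∧ otp (Y ∩ Set.Iio (omap X Y a)) = otp (X ∩ Set.Iio a) := by
  obtain ⟨b, hbY, hb⟩ := otp_inter_surj hY (hotp ▸ otp_inter_lt ha hX)
  have hset : {c | c ∈ Y ∧ otp (Y ∩ Set.Iio c) = otp (X ∩ Set.Iio a)} = {b} := by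
    ext c
    constructor
    · rintro ⟨hc, e⟩
      exact otp_inter_injOn hc hbY (e.trans hb.symm)
    · rintro rfl
      exact ⟨hbY, hb⟩
  rw [omap, hset, csInf_singleton]
  exact ⟨hbY, hb⟩

theorem omap_injOn {X Y : Set Ordinal.{0}} (hX : OBdd X) (hY : OBdd Y) (hotp : otp X = otp Y) :
    Set.InjOn (omap X Y) X := by
  intro a ha a' ha' he
  have h1 := omap_spec hX hY hotp ha
  have h2 := omap_spec hX hY hotp ha'
  exact otp_inter_injOn ha ha' (by rw [← h1.2, he, h2.2])

theorem omap_image {X Y : Set Ordinal.{0}} (hX : OBdd X) (hY : OBdd Y) (hotp : otp X = otp Y) :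
    omap X Y '' X = Y := by
  ext b
  constructor
  · rintro ⟨a, ha, rfl⟩
    exact (omap_spec hX hY hotp ha).1
  · intro hb
    have h2 : otp (Y ∩ Set.Iio b) < otp X := hotp ▸ otp_inter_lt hb hY
    obtain ⟨a, haX, ha⟩ := otp_inter_surj hX h2
    have h3 := omap_spec hX hY hotp haX
    exact ⟨a, haX, otp_inter_injOn h3.1 hb (by rw [h3.2, ha])⟩

theorem omap_fix {X Y : Set Ordinal.{0}} (hX : OBdd X) (hY : OBdd Y) (hotp : otp X = otp Y)
    {a : Ordinal} (haX : a ∈ X) (haY : a ∈ Y) (hseg : X ∩ Set.Iio a = Y ∩ Set.Iio a) :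
    omap X Y a = a := by
  have h := omap_spec hX hY hotp haX
  exact otp_inter_injOn h.1 haY (by rw [h.2, hseg])

/-! ### enumeration of a bounded set of ordinals -/

theorem exists_enum {s : Set Ordinal.{0}} (h : OBdd s) :
    ∃ e : (otp s).ToType → s, Function.Surjective e := by
  have key : Nonempty (((· < ·) : (otp s).ToType → (otp s).ToType → Prop) ≃r
      Subrel ((· < ·) : Ordinal → Ordinal → Prop) (· ∈ s)) := by
    haveI : IsWellOrder (otp s).ToType ((· < ·) : (otp s).ToType → (otp s).ToType → Prop) :=
      isWellOrder_lt
    refine Ordinal.lift_type_eq.{0, 1, 0}.1 ?_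
    rw [Ordinal.type_toType, lift_otp h, Ordinal.lift_id']
  obtain ⟨iso⟩ := key
  exact ⟨fun i => iso i, fun b => ⟨iso.symm b, by simp⟩⟩


theorem olift_ne_zero {a : Ordinal.{0}} (h : a ≠ 0) : Ordinal.lift.{1} a ≠ 0 := by
  intro h0
  apply h
  have hz : Ordinal.lift.{1} (0 : Ordinal.{0}) = (0 : Ordinal.{1}) := Ordinal.lift_zero
  exact Ordinal.lift_inj.1 (by rw [h0, hz])

end Aux


namespace TwoCardinal

section Lemmas

set_option linter.deprecated false

variable {κ : Cardinal.{0}} {M : TwoCardinal κ}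

theorem wfrank_lt {X Y : M.mu} (h : (X : Set Ordinal) ⊂ (Y : Set Ordinal)) :
    (M.wf.apply X).rank < (M.wf.apply Y).rank :=
  Acc.rank_lt_of_rel (M.wf.apply Y) h

theorem obdd (X : M.mu) : OBdd (X : Set Ordinal) := ⟨_, M.mem_sub X X.2⟩

theorem isRegular_lift {c : Cardinal.{0}} (h : c.IsRegular) :
    (Cardinal.lift.{1} c).IsRegular := by
  constructor
  · rw [← Cardinal.lift_aleph0.{1, 0}]
    exact Cardinal.lift_le.2 h.1
  · rw [← Cardinal.lift_ord, ← Ordinal.lift_cof]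
    exact Cardinal.lift_le.2 h.2

theorem wf_rank_lt (hκ : κ.IsRegular) (X : M.mu) :
    (M.wf.apply X).rank < Ordinal.lift.{1} κ.ord := by
  refine M.wf.induction (C := fun Y => (M.wf.apply Y).rank < Ordinal.lift.{1} κ.ord) X ?_
  intro Y IH
  rw [Acc.rank_eq]
  have hcof : (Ordinal.lift.{1} κ.ord).cof = Cardinal.lift.{1} κ := by
    rw [← Ordinal.lift_cof, hκ.cof_eq]
  have hlim : Order.IsSuccLimit (Ordinal.lift.{1} κ.ord) := by
    rw [Cardinal.lift_ord]
    exact Cardinal.isSuccLimit_ord (by rw [← Cardinal.lift_aleph0.{1, 0}]; exact Cardinal.lift_le.2 hκ.1)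
  refine Ordinal.iSup_lt_ord (by rw [hcof]; exact M.locSmall Y) ?_
  rintro ⟨Z, hZ⟩
  exact hlim.succ_lt (IH Z hZ)

theorem lift_rank (hκ : κ.IsRegular) (X : M.mu) :
    Ordinal.lift.{1} (M.rank X) = (M.wf.apply X).rank :=
  lift_olower (Ordinal.mem_range_lift_of_le (wf_rank_lt hκ X).le)

theorem rank_lt_ord (hκ : κ.IsRegular) (X : M.mu) : M.rank X < κ.ord := by
  rw [← Ordinal.lift_lt.{1}, lift_rank hκ X]
  exact wf_rank_lt hκ X

theorem rank_lt_of_ssubset (hκ : κ.IsRegular) {X Y : M.mu}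
    (h : (X : Set Ordinal) ⊂ (Y : Set Ordinal)) : M.rank X < M.rank Y := by
  rw [← Ordinal.lift_lt.{1}, lift_rank hκ X, lift_rank hκ Y]
  exact wfrank_lt h

theorem rank_le_of_subset (hκ : κ.IsRegular) {X Y : M.mu}
    (h : (X : Set Ordinal) ⊆ (Y : Set Ordinal)) : M.rank X ≤ M.rank Y := by
  rcases h.lt_or_eq with h' | h'
  · exact (rank_lt_of_ssubset hκ h').le
  · rw [show X = Y from Subtype.ext h']

theorem wf_rank_eq_of_rank_eq (hκ : κ.IsRegular) {X Y : M.mu} (h : M.rank X = M.rank Y) :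
    (M.wf.apply X).rank = (M.wf.apply Y).rank := by
  rw [← lift_rank hκ X, ← lift_rank hκ Y, h]

theorem rank_eq_of_wf_rank_eq (hκ : κ.IsRegular) {X Y : M.mu} (h : (M.wf.apply X).rank = (M.wf.apply Y).rank) :
    M.rank X = M.rank Y :=
  Ordinal.lift_inj.1 (by rw [lift_rank hκ X, lift_rank hκ Y, h])

theorem bddAbove_rank (hκ : κ.IsRegular) :
    BddAbove (Set.range fun X : M.mu => M.rank X + 1) := by
  refine ⟨κ.ord, ?_⟩
  rintro _ ⟨X, rfl⟩
  simp only []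
  rw [Ordinal.add_one_eq_succ, Order.succ_le_iff]
  exact rank_lt_ord hκ X

theorem ht_le (hκ : κ.IsRegular) : M.ht ≤ κ.ord := by
  refine csSup_le' ?_
  rintro _ ⟨X, rfl⟩
  simp only []
  rw [Ordinal.add_one_eq_succ, Order.succ_le_iff]
  exact rank_lt_ord hκ X

theorem rank_lt_ht (hκ : κ.IsRegular) (X : M.mu) : M.rank X < M.ht := by
  have h : M.rank X + 1 ≤ M.ht := le_csSup (bddAbove_rank hκ) ⟨X, rfl⟩
  rw [Ordinal.add_one_eq_succ] at h
  exact (Order.lt_succ _).trans_le h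

theorem exists_rank_ge (hκ : κ.IsRegular) {η : Ordinal} (hη : η < M.ht) :
    ∃ X : M.mu, η ≤ M.rank X := by
  by_contra h
  push_neg at h
  refine absurd (csSup_le' ?_) (not_le.2 hη)
  rintro _ ⟨X, rfl⟩
  simp only []
  rw [Ordinal.add_one_eq_succ, Order.succ_le_iff]
  exact h X

theorem exists_mem_of_lt {a : Ordinal} (ha : a < (Order.succ κ).ord) :
    ∃ X : M.mu, a ∈ (X : Set Ordinal) := by
  have h : a ∈ ⋃₀ M.mu := by rw [M.covers]; exact ha
  obtain ⟨S, hS, haS⟩ := h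
  exact ⟨⟨S, hS⟩, haS⟩

theorem directed' (X Y : M.mu) :
    ∃ Z : M.mu, (X : Set Ordinal) ⊆ (Z : Set Ordinal) ∧ (Y : Set Ordinal) ⊆ (Z : Set Ordinal) := by
  obtain ⟨Z, hZ, h1, h2⟩ := M.directed X X.2 Y Y.2
  exact ⟨⟨Z, hZ⟩, h1, h2⟩

theorem exists_pred_rank_ge {X : M.mu} {ξ : Ordinal.{1}} (h : ξ < (M.wf.apply X).rank) :
    ∃ Z : M.mu, (Z : Set Ordinal) ⊂ (X : Set Ordinal) ∧ ξ ≤ (M.wf.apply Z).rank := by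
  rw [Acc.rank_eq, Ordinal.lt_iSup_iff] at h
  obtain ⟨⟨Z, hZ⟩, h⟩ := h
  exact ⟨Z, hZ, Order.lt_succ_iff.1 h⟩

theorem star_ssubset₁ {X X₁ X₂ : M.mu}
    (hmu : {Z | Z ∈ M.mu ∧ Z ⊂ (X : Set Ordinal)} =
      {Z | Z ∈ M.mu ∧ Z ⊂ (X₁ : Set Ordinal)} ∪ {Z | Z ∈ M.mu ∧ Z ⊂ (X₂ : Set Ordinal)} ∪
        {(X₁ : Set Ordinal), (X₂ : Set Ordinal)}) :
    (X₁ : Set Ordinal) ⊂ (X : Set Ordinal) := by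
  have h : (X₁ : Set Ordinal) ∈ {Z | Z ∈ M.mu ∧ Z ⊂ (X : Set Ordinal)} := by
    rw [hmu]; exact Set.mem_union_right _ (Set.mem_insert _ _)
  exact h.2

theorem star_ssubset₂ {X X₁ X₂ : M.mu}
    (hmu : {Z | Z ∈ M.mu ∧ Z ⊂ (X : Set Ordinal)} =
      {Z | Z ∈ M.mu ∧ Z ⊂ (X₁ : Set Ordinal)} ∪ {Z | Z ∈ M.mu ∧ Z ⊂ (X₂ : Set Ordinal)} ∪
        {(X₁ : Set Ordinal), (X₂ : Set Ordinal)}) :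
    (X₂ : Set Ordinal) ⊂ (X : Set Ordinal) := by
  have h : (X₂ : Set Ordinal) ∈ {Z | Z ∈ M.mu ∧ Z ⊂ (X : Set Ordinal)} := by
    rw [hmu]; exact Set.mem_union_right _ (Set.mem_insert_iff.2 (Or.inr rfl))
  exact h.2

theorem star_rank_le {X X₁ X₂ : M.mu} (hr12 : (M.wf.apply X₁).rank = (M.wf.apply X₂).rank)
    (hmu : {Z | Z ∈ M.mu ∧ Z ⊂ (X : Set Ordinal)} =
      {Z | Z ∈ M.mu ∧ Z ⊂ (X₁ : Set Ordinal)} ∪ {Z | Z ∈ M.mu ∧ Z ⊂ (X₂ : Set Ordinal)} ∪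
        {(X₁ : Set Ordinal), (X₂ : Set Ordinal)})
    {Z : Set Ordinal} (hZ : Z ∈ M.mu) (hss : Z ⊂ (X : Set Ordinal)) :
    (M.wf.apply (⟨Z, hZ⟩ : M.mu)).rank ≤ (M.wf.apply X₁).rank := by
  have h : Z ∈ {Z | Z ∈ M.mu ∧ Z ⊂ (X₁ : Set Ordinal)} ∪ {Z | Z ∈ M.mu ∧ Z ⊂ (X₂ : Set Ordinal)} ∪
      {(X₁ : Set Ordinal), (X₂ : Set Ordinal)} := by
    rw [← hmu]; exact ⟨hZ, hss⟩
  rcases h with (⟨_, h1⟩ | ⟨_, h2⟩) | h3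
  · exact (wfrank_lt h1).le
  · rw [hr12]; exact (wfrank_lt h2).le
  · rcases Set.mem_insert_iff.1 h3 with e | e
    · exact le_of_eq (by rw [show (⟨Z, hZ⟩ : M.mu) = X₁ from Subtype.ext e])
    · exact le_of_eq (by rw [show (⟨Z, hZ⟩ : M.mu) = X₂ from Subtype.ext e, hr12])

theorem star_wf_rank {X X₁ X₂ : M.mu} (hr12 : (M.wf.apply X₁).rank = (M.wf.apply X₂).rank)
    (hmu : {Z | Z ∈ M.mu ∧ Z ⊂ (X : Set Ordinal)} =
      {Z | Z ∈ M.mu ∧ Z ⊂ (X₁ : Set Ordinal)} ∪ {Z | Z ∈ M.mu ∧ Z ⊂ (X₂ : Set Ordinal)} ∪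
        {(X₁ : Set Ordinal), (X₂ : Set Ordinal)}) :
    (M.wf.apply X).rank = (M.wf.apply X₁).rank + 1 := by
  apply le_antisymm
  · rw [Acc.rank_eq]
    refine Ordinal.iSup_le ?_
    rintro ⟨Z, hZss⟩
    rw [Ordinal.add_one_eq_succ]
    exact Order.succ_le_succ (star_rank_le hr12 hmu Z.2 hZss)
  · rw [Ordinal.add_one_eq_succ, Order.succ_le_iff]
    exact wfrank_lt (star_ssubset₁ hmu)

theorem descent (hκ : κ.IsRegular) (X : M.mu) :
    ∀ a ∈ (X : Set Ordinal), ∀ ξ, ξ ≤ M.rank X →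
      ∃ Z : M.mu, (Z : Set Ordinal) ⊆ (X : Set Ordinal) ∧ a ∈ (Z : Set Ordinal) ∧ M.rank Z = ξ := by
  refine M.wf.induction (C := fun X => ∀ a ∈ (X : Set Ordinal), ∀ ξ, ξ ≤ M.rank X →
    ∃ Z : M.mu, (Z : Set Ordinal) ⊆ (X : Set Ordinal) ∧ a ∈ (Z : Set Ordinal) ∧ M.rank Z = ξ)
    X ?_
  clear X
  intro X IH a ha ξ hξ
  rcases hξ.lt_or_eq with hlt | heq
  swap
  · exact ⟨X, subset_rfl, ha, heq.symm⟩
  have hlt' : Ordinal.lift.{1} ξ < (M.wf.apply X).rank := by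
    rw [← lift_rank hκ X]; exact Ordinal.lift_lt.2 hlt
  have hne : (M.wf.apply X).rank ≠ 0 := ((zero_le (a := Ordinal.lift.{1} ξ)).trans_lt hlt').ne'
  have haU : a ∈ ⋃₀ {Z | Z ∈ M.mu ∧ Z ⊂ (X : Set Ordinal)} := by
    rw [← M.neat X hne]; exact ha
  obtain ⟨Z₁, ⟨hZ₁mu, hZ₁ss⟩, haZ₁⟩ := haU
  obtain ⟨Z₂, hZ₂ss, hZ₂ge⟩ := exists_pred_rank_ge hlt'
  rcases M.locAlmostDirected X with hdir | ⟨X₁, X₂, hr12, hstar, hmu⟩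
  · obtain ⟨Z, hZmu, hZss, h1, h2⟩ := hdir Z₁ hZ₁mu (Z₂ : Set Ordinal) Z₂.2 hZ₁ss hZ₂ss
    have hξ2 : ξ ≤ M.rank Z₂ := by
      rw [← Ordinal.lift_le.{1}, lift_rank hκ Z₂]; exact hZ₂ge
    have hξZ : ξ ≤ M.rank ⟨Z, hZmu⟩ :=
      hξ2.trans (rank_le_of_subset hκ (X := Z₂) (Y := ⟨Z, hZmu⟩) h2)
    obtain ⟨Z', hZ'1, hZ'2, hZ'3⟩ := IH ⟨Z, hZmu⟩ hZss a (h1 haZ₁) ξ hξZ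
    exact ⟨Z', hZ'1.trans hZss.subset, hZ'2, hZ'3⟩
  · have hle : (M.wf.apply Z₂).rank ≤ (M.wf.apply X₁).rank := by
      have := star_rank_le hr12 hmu Z₂.2 hZ₂ss
      simpa using this
    have hξ₁ : ξ ≤ M.rank X₁ := by
      rw [← Ordinal.lift_le.{1}, lift_rank hκ X₁]
      exact hZ₂ge.trans hle
    have hsub : a ∈ (X₁ : Set Ordinal) ∪ (X₂ : Set Ordinal) := by
      rw [← hstar.2.1]; exact ha
    rcases hsub with h | h
    · obtain ⟨Z', h1, h2, h3⟩ := IH X₁ (star_ssubset₁ hmu) a h ξ hξ₁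
      exact ⟨Z', h1.trans (star_ssubset₁ hmu).subset, h2, h3⟩
    · have hξ₂ : ξ ≤ M.rank X₂ := by rwa [rank_eq_of_wf_rank_eq hκ hr12] at hξ₁
      obtain ⟨Z', h1, h2, h3⟩ := IH X₂ (star_ssubset₂ hmu) a h ξ hξ₂
      exact ⟨Z', h1.trans (star_ssubset₂ hmu).subset, h2, h3⟩


theorem omap_image_mem {X₁ X₂ : M.mu} (hr12 : (M.wf.apply X₁).rank = (M.wf.apply X₂).rank)
    {Z : Set Ordinal} (hZmu : Z ∈ M.mu) (hZsub : Z ⊆ (X₁ : Set Ordinal)) :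
    omap (X₁ : Set Ordinal) (X₂ : Set Ordinal) '' Z ∈ M.mu := by
  rcases hZsub.lt_or_eq with hss | heq
  · have himg := (M.homog X₁ X₂ hr12).2
    have h : omap (X₁ : Set Ordinal) (X₂ : Set Ordinal) '' Z ∈
        {Z | Z ∈ M.mu ∧ Z ⊂ (X₂ : Set Ordinal)} := by
      rw [himg]; exact ⟨Z, ⟨hZmu, hss⟩, rfl⟩
    exact h.1
  · rw [heq, omap_image (obdd X₁) (obdd X₂) (M.homog X₁ X₂ hr12).1]
    exact X₂.2

theorem rank_omap_image {X₁ X₂ : M.mu} (hr12 : (M.wf.apply X₁).rank = (M.wf.apply X₂).rank) (Z : M.mu) :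
    (Z : Set Ordinal) ⊆ (X₁ : Set Ordinal) →
      ∀ h : omap (X₁ : Set Ordinal) (X₂ : Set Ordinal) '' (Z : Set Ordinal) ∈ M.mu,
        (M.wf.apply (⟨_, h⟩ : M.mu)).rank = (M.wf.apply Z).rank := by
  have hotp := (M.homog X₁ X₂ hr12).1
  have himg := (M.homog X₁ X₂ hr12).2
  have hinj : Set.InjOn (omap (X₁ : Set Ordinal) (X₂ : Set Ordinal)) (X₁ : Set Ordinal) :=
    omap_injOn (obdd X₁) (obdd X₂) hotp
  have hfull : omap (X₁ : Set Ordinal) (X₂ : Set Ordinal) '' (X₁ : Set Ordinal) =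
      (X₂ : Set Ordinal) := omap_image (obdd X₁) (obdd X₂) hotp
  refine M.wf.induction (C := fun Z => (Z : Set Ordinal) ⊆ (X₁ : Set Ordinal) →
    ∀ h : omap (X₁ : Set Ordinal) (X₂ : Set Ordinal) '' (Z : Set Ordinal) ∈ M.mu,
      (M.wf.apply (⟨_, h⟩ : M.mu)).rank = (M.wf.apply Z).rank) Z ?_
  clear Z
  intro Z IH hZsub h
  apply le_antisymm
  · rw [Acc.rank_eq (M.wf.apply (⟨_, h⟩ : M.mu))]
    refine Ordinal.iSup_le ?_
    rintro ⟨W', hW'ss⟩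
    have h3 : omap (X₁ : Set Ordinal) (X₂ : Set Ordinal) '' (Z : Set Ordinal) ⊆
        (X₂ : Set Ordinal) :=
      (Set.image_mono (f := omap (X₁ : Set Ordinal) (X₂ : Set Ordinal)) hZsub).trans hfull.le
    have hW'X₂ : (W' : Set Ordinal) ⊂ (X₂ : Set Ordinal) := hW'ss.trans_le h3
    obtain ⟨W, ⟨hWmu, hWss⟩, hWeq⟩ : ∃ W, (W ∈ M.mu ∧ W ⊂ (X₁ : Set Ordinal)) ∧
        omap (X₁ : Set Ordinal) (X₂ : Set Ordinal) '' W = (W' : Set Ordinal) := by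
      have h2 : (W' : Set Ordinal) ∈ {Z | Z ∈ M.mu ∧ Z ⊂ (X₂ : Set Ordinal)} := ⟨W'.2, hW'X₂⟩
      rw [himg] at h2
      exact h2
    have hWZ : W ⊂ (Z : Set Ordinal) := by
      refine (hinj.image_ssubset_image_iff hWss.subset hZsub).1 ?_
      rw [hWeq]
      exact hW'ss
    have hmem : omap (X₁ : Set Ordinal) (X₂ : Set Ordinal) '' W ∈ M.mu := by
      rw [hWeq]; exact W'.2
    have e : W' = ⟨omap (X₁ : Set Ordinal) (X₂ : Set Ordinal) '' W, hmem⟩ := Subtype.ext hWeq.symm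
    have hrank := IH ⟨W, hWmu⟩ hWZ hWss.subset hmem
    have e2 : (M.wf.apply W').rank = (M.wf.apply (⟨W, hWmu⟩ : M.mu)).rank := by rw [e]; exact hrank
    rw [e2]
    exact Order.succ_le_iff.2 (wfrank_lt hWZ)
  · rw [Acc.rank_eq (M.wf.apply Z)]
    refine Ordinal.iSup_le ?_
    rintro ⟨W, hWss⟩
    have hWX₁ : (W : Set Ordinal) ⊆ (X₁ : Set Ordinal) := hWss.subset.trans hZsub
    have hmem : omap (X₁ : Set Ordinal) (X₂ : Set Ordinal) '' (W : Set Ordinal) ∈ M.mu :=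
      omap_image_mem hr12 W.2 hWX₁
    have himss : omap (X₁ : Set Ordinal) (X₂ : Set Ordinal) '' (W : Set Ordinal) ⊂
        omap (X₁ : Set Ordinal) (X₂ : Set Ordinal) '' (Z : Set Ordinal) :=
      (hinj.image_ssubset_image_iff hWX₁ hZsub).2 hWss
    have hlt : (M.wf.apply (⟨_, hmem⟩ : M.mu)).rank < (M.wf.apply (⟨_, h⟩ : M.mu)).rank :=
      wfrank_lt himss
    rw [← IH W hWss hWX₁ hmem]
    exact Order.succ_le_iff.2 hlt


theorem coh_aux (hκ : κ.IsRegular) (W : M.mu) :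
    ∀ X Y : M.mu, (X : Set Ordinal) ⊆ (W : Set Ordinal) → (Y : Set Ordinal) ⊆ (W : Set Ordinal) →
      (M.wf.apply X).rank = (M.wf.apply Y).rank → ∀ a : Ordinal, a ∈ (X : Set Ordinal) → a ∈ (Y : Set Ordinal) →
        (X : Set Ordinal) ∩ Set.Iio a = (Y : Set Ordinal) ∩ Set.Iio a := by
  refine M.wf.induction (C := fun W => ∀ X Y : M.mu,
    (X : Set Ordinal) ⊆ (W : Set Ordinal) → (Y : Set Ordinal) ⊆ (W : Set Ordinal) →
      (M.wf.apply X).rank = (M.wf.apply Y).rank → ∀ a : Ordinal, a ∈ (X : Set Ordinal) → a ∈ (Y : Set Ordinal) →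
        (X : Set Ordinal) ∩ Set.Iio a = (Y : Set Ordinal) ∩ Set.Iio a) W ?_
  clear W
  intro W IH X Y hXW hYW hr a haX haY
  rcases hXW.lt_or_eq with hXW | hXW
  swap
  · rcases hYW.lt_or_eq with hYW | hYW
    · exfalso
      have hlt := wfrank_lt hYW
      have eXW : X = W := Subtype.ext hXW
      rw [← eXW, ← hr] at hlt
      exact lt_irrefl _ hlt
    · have e : X = Y := Subtype.ext (hXW.trans hYW.symm)
      rw [e]
  rcases hYW.lt_or_eq with hYW | hYW
  swap
  · exfalso
    have hlt := wfrank_lt hXW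
    have eYW : Y = W := Subtype.ext hYW
    rw [hr, ← eYW, lt_self_iff_false] at hlt
    exact hlt
  rcases M.locAlmostDirected W with hdir | ⟨X₁, X₂, hr12, hstar, hmu⟩
  · obtain ⟨Z, hZmu, hZss, h1, h2⟩ := hdir (X : Set Ordinal) X.2 (Y : Set Ordinal) Y.2 hXW hYW
    exact IH ⟨Z, hZmu⟩ hZss X Y h1 h2 hr a haX haY
  · have hssub₁ := star_ssubset₁ hmu
    have hssub₂ := star_ssubset₂ hmu
    have hne₁ : ¬ (X₁ : Set Ordinal) ⊆ (X₂ : Set Ordinal) := by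
      intro hsub
      have he : (W : Set Ordinal) = (X₂ : Set Ordinal) := by
        rw [hstar.2.1]; exact Set.union_eq_self_of_subset_left hsub
      rw [he] at hssub₂
      exact ssubset_irrefl _ hssub₂
    have hne₂ : ¬ (X₂ : Set Ordinal) ⊆ (X₁ : Set Ordinal) := by
      intro hsub
      have he : (W : Set Ordinal) = (X₁ : Set Ordinal) := by
        rw [hstar.2.1]; exact Set.union_eq_self_of_subset_right hsub
      rw [he] at hssub₁
      exact ssubset_irrefl _ hssub₁
    have hcases : ∀ V : M.mu, (V : Set Ordinal) ⊂ (W : Set Ordinal) →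
        (V : Set Ordinal) ⊆ (X₁ : Set Ordinal) ∨ (V : Set Ordinal) ⊆ (X₂ : Set Ordinal) := by
      intro V hV
      have h : (V : Set Ordinal) ∈ {Z | Z ∈ M.mu ∧ Z ⊂ (X₁ : Set Ordinal)} ∪
          {Z | Z ∈ M.mu ∧ Z ⊂ (X₂ : Set Ordinal)} ∪
          {(X₁ : Set Ordinal), (X₂ : Set Ordinal)} := by
        rw [← hmu]; exact ⟨V.2, hV⟩
      rcases h with (⟨_, h1⟩ | ⟨_, h2⟩) | h3
      · exact Or.inl h1.subset
      · exact Or.inr h2.subset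
      · rcases Set.mem_insert_iff.1 h3 with e | e
        · exact Or.inl e.subset
        · exact Or.inr e.subset
    have key : ∀ X Y : M.mu, (X : Set Ordinal) ⊆ (X₁ : Set Ordinal) →
        (Y : Set Ordinal) ⊆ (X₂ : Set Ordinal) → (M.wf.apply X).rank = (M.wf.apply Y).rank →
        ∀ a : Ordinal, a ∈ (X : Set Ordinal) → a ∈ (Y : Set Ordinal) →
          (X : Set Ordinal) ∩ Set.Iio a = (Y : Set Ordinal) ∩ Set.Iio a := by
      clear hr haX haY hXW hYW
      intro X Y hX1 hY2 hr a haX haY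
      have hotp := (M.homog X₁ X₂ hr12).1
      have himg := (M.homog X₁ X₂ hr12).2
      have hinj := omap_injOn (obdd X₁) (obdd X₂) hotp
      have hfull := omap_image (obdd X₁) (obdd X₂) hotp
      have hD₁ : ∀ c ∈ (X₁ : Set Ordinal), ∀ d, d ∈ (X₁ : Set Ordinal) →
          d ∈ (X₂ : Set Ordinal) → c < d → c ∈ (X₂ : Set Ordinal) := by
        intro c hc d hd1 hd2 hcd
        by_contra hc2
        exact absurd (hstar.2.2.1 d ⟨hd1, hd2⟩ c ⟨hc, hc2⟩) (not_lt.2 hcd.le)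
      have hD₂ : ∀ c ∈ (X₂ : Set Ordinal), ∀ d, d ∈ (X₁ : Set Ordinal) →
          d ∈ (X₂ : Set Ordinal) → c < d → c ∈ (X₁ : Set Ordinal) := by
        intro c hc d hd1 hd2 hcd
        by_contra hc1
        obtain ⟨b₀, hb₀1, hb₀2⟩ := Set.not_subset.1 hne₁
        have h1 := hstar.2.2.1 d ⟨hd1, hd2⟩ b₀ ⟨hb₀1, hb₀2⟩
        have h2 := hstar.2.2.2 b₀ ⟨hb₀1, hb₀2⟩ c ⟨hc, hc1⟩
        exact absurd (h1.trans h2) (not_lt.2 hcd.le)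
      have hseg : ∀ d, d ∈ (X₁ : Set Ordinal) → d ∈ (X₂ : Set Ordinal) →
          (X₁ : Set Ordinal) ∩ Set.Iio d = (X₂ : Set Ordinal) ∩ Set.Iio d := by
        intro d hd1 hd2
        ext c
        constructor
        · rintro ⟨hc, hcd⟩
          exact ⟨hD₁ c hc d hd1 hd2 hcd, hcd⟩
        · rintro ⟨hc, hcd⟩
          exact ⟨hD₂ c hc d hd1 hd2 hcd, hcd⟩
      have hfix : ∀ d, d ∈ (X₁ : Set Ordinal) → d ∈ (X₂ : Set Ordinal) →
          omap (X₁ : Set Ordinal) (X₂ : Set Ordinal) d = d := fun d hd1 hd2 =>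
        omap_fix (obdd X₁) (obdd X₂) hotp hd1 hd2 (hseg d hd1 hd2)
      have haD1 : a ∈ (X₁ : Set Ordinal) := hX1 haX
      have haD2 : a ∈ (X₂ : Set Ordinal) := hY2 haY
      obtain ⟨Zs, hZmu, hZsub, hfZ⟩ : ∃ Zs, ∃ _ : Zs ∈ M.mu, Zs ⊆ (X₁ : Set Ordinal) ∧
          omap (X₁ : Set Ordinal) (X₂ : Set Ordinal) '' Zs = (Y : Set Ordinal) := by
        rcases hY2.lt_or_eq with hYss | hYeq
        · have h2 : (Y : Set Ordinal) ∈ {Z | Z ∈ M.mu ∧ Z ⊂ (X₂ : Set Ordinal)} := ⟨Y.2, hYss⟩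
          rw [himg] at h2
          obtain ⟨Zs, ⟨h4, h5⟩, h6⟩ := h2
          exact ⟨Zs, h4, h5.subset, h6⟩
        · exact ⟨(X₁ : Set Ordinal), X₁.2, subset_rfl, by rw [hfull, hYeq]⟩
      have hrZ : (M.wf.apply (⟨Zs, hZmu⟩ : M.mu)).rank = (M.wf.apply Y).rank := by
        have h7 : omap (X₁ : Set Ordinal) (X₂ : Set Ordinal) '' Zs ∈ M.mu := by
          rw [hfZ]; exact Y.2
        have h8 := rank_omap_image hr12 ⟨Zs, hZmu⟩ hZsub h7
        have h9 : (⟨_, h7⟩ : M.mu) = Y := Subtype.ext hfZ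
        rw [← h9]
        exact h8.symm
      have haZ : a ∈ Zs := by
        have h10 : a ∈ omap (X₁ : Set Ordinal) (X₂ : Set Ordinal) '' Zs := by
          rw [hfZ]; exact haY
        obtain ⟨z, hz, hza⟩ := h10
        have e : z = a := hinj (hZsub hz) haD1 (by rw [hza, hfix a haD1 haD2])
        rwa [e] at hz
      have hYZ : (Y : Set Ordinal) ∩ Set.Iio a = Zs ∩ Set.Iio a := by
        ext c
        constructor
        · rintro ⟨hcY, hca⟩
          have hcD1 : c ∈ (X₁ : Set Ordinal) := hD₂ c (hY2 hcY) a haD1 haD2 hca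
          have h11 : c ∈ omap (X₁ : Set Ordinal) (X₂ : Set Ordinal) '' Zs := by
            rw [hfZ]; exact hcY
          obtain ⟨z, hz, hzc⟩ := h11
          have e : z = c := hinj (hZsub hz) hcD1 (by rw [hzc, hfix c hcD1 (hY2 hcY)])
          rw [e] at hz
          exact ⟨hz, hca⟩
        · rintro ⟨hcZ, hca⟩
          have hc1 : c ∈ (X₁ : Set Ordinal) := hZsub hcZ
          have hcD2 : c ∈ (X₂ : Set Ordinal) := hD₁ c hc1 a haD1 haD2 hca
          have hcY : c ∈ (Y : Set Ordinal) := by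
            rw [← hfZ]
            exact ⟨c, hcZ, hfix c hc1 hcD2⟩
          exact ⟨hcY, hca⟩
      have hXZ := IH X₁ hssub₁ X ⟨Zs, hZmu⟩ hX1 hZsub (hr.trans hrZ.symm) a haX haZ
      exact hXZ.trans hYZ.symm
    rcases hcases X hXW with hX1 | hX2 <;> rcases hcases Y hYW with hY1 | hY2
    · exact IH X₁ hssub₁ X Y hX1 hY1 hr a haX haY
    · exact key X Y hX1 hY2 hr a haX haY
    · exact (key Y X hY1 hX2 hr.symm a haY haX).symm
    · exact IH X₂ hssub₂ X Y hX2 hY2 hr a haX haY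

theorem coh (hκ : κ.IsRegular) (X Y : M.mu) (hr : (M.wf.apply X).rank = (M.wf.apply Y).rank) {a : Ordinal}
    (haX : a ∈ (X : Set Ordinal)) (haY : a ∈ (Y : Set Ordinal)) :
    (X : Set Ordinal) ∩ Set.Iio a = (Y : Set Ordinal) ∩ Set.Iio a := by
  obtain ⟨W, h1, h2⟩ := directed' X Y
  exact coh_aux hκ W X Y h1 h2 hr a haX haY


theorem seq_subset_Iio (α ξ : Ordinal) : M.seq α ξ ⊆ Set.Iio α := by
  rintro β ⟨S, ⟨X, h1, h2, rfl⟩, hβ⟩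
  exact hβ.2

theorem mem_seq_of {Z : M.mu} {α β : Ordinal} (hα : α ∈ (Z : Set Ordinal))
    (hβ : β ∈ (Z : Set Ordinal)) (h : β < α) : β ∈ M.seq α (M.rank Z) :=
  ⟨(Z : Set Ordinal) ∩ Set.Iio α, ⟨Z, rfl, hα, rfl⟩, hβ, h⟩

theorem seq_eq (hκ : κ.IsRegular) {X : M.mu} {α : Ordinal} (hα : α ∈ (X : Set Ordinal)) :
    M.seq α (M.rank X) = (X : Set Ordinal) ∩ Set.Iio α := by
  apply Set.Subset.antisymm
  · rintro β ⟨S, ⟨Y, h1, h2, rfl⟩, hβ⟩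
    have hwr : (M.wf.apply Y).rank = (M.wf.apply X).rank := wf_rank_eq_of_rank_eq hκ h1
    rw [← coh hκ Y X hwr h2 hα]
    exact hβ
  · intro β hβ
    exact ⟨_, ⟨X, rfl, hα, rfl⟩, hβ⟩

theorem museq_mono (hκ : κ.IsRegular) {α : Ordinal} (hα : α < (Order.succ κ).ord)
    (ξ η : Ordinal) (hξη : ξ ≤ η) (hη : η < M.ht) : M.seq α ξ ⊆ M.seq α η := by
  intro β hβ
  obtain ⟨S, ⟨Y, hYr, hYα, rfl⟩, hβY, hβα⟩ := hβ
  obtain ⟨Xa, hXa⟩ := exists_mem_of_lt (M := M) hα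
  obtain ⟨X₀, hX₀⟩ := exists_rank_ge hκ hη
  obtain ⟨V, hV1, hV2⟩ := directed' Xa X₀
  have hηV : η ≤ M.rank V := hX₀.trans (rank_le_of_subset hκ hV2)
  obtain ⟨Z, hZV, hαZ, hZr⟩ := descent hκ V α (hV1 hXa) η hηV
  obtain ⟨Y', hY'Z, hαY', hY'r⟩ := descent hκ Z α hαZ ξ (by rw [hZr]; exact hξη)
  have hco := coh hκ Y Y' (wf_rank_eq_of_rank_eq hκ (hYr.trans hY'r.symm)) hYα hαY'
  have hβ' : β ∈ (Y' : Set Ordinal) ∩ Set.Iio α := by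
    rw [← hco]; exact ⟨hβY, hβα⟩
  have hm : β ∈ M.seq α (M.rank Z) := mem_seq_of hαZ (hY'Z hβ'.1) hβ'.2
  rwa [hZr] at hm

theorem museq_cont (hκ : κ.IsRegular) {α : Ordinal} (hα : α < (Order.succ κ).ord)
    (δ : Ordinal) (hδht : δ < M.ht) (hδ : Order.IsSuccLimit δ) :
    M.seq α δ = ⋃ ξ ∈ Set.Iio δ, M.seq α ξ := by
  apply Set.Subset.antisymm
  · rintro β ⟨S, ⟨X, hXr, hXα, rfl⟩, hβX, hβα⟩
    rcases M.locAlmostDirected X with hdir | ⟨X₁, X₂, hr12, hstar, hmu⟩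
    · have hne : (M.wf.apply X).rank ≠ 0 := by
        rw [← lift_rank hκ X]
        exact olift_ne_zero (by rw [hXr]; exact hδ.ne_bot)
      have hXeq := M.neat X hne
      obtain ⟨Z₁, ⟨hZ₁mu, hZ₁ss⟩, hαZ₁⟩ : α ∈ ⋃₀ {Z | Z ∈ M.mu ∧ Z ⊂ (X : Set Ordinal)} := by
        rw [← hXeq]; exact hXα
      obtain ⟨Z₂, ⟨hZ₂mu, hZ₂ss⟩, hβZ₂⟩ : β ∈ ⋃₀ {Z | Z ∈ M.mu ∧ Z ⊂ (X : Set Ordinal)} := by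
        rw [← hXeq]; exact hβX
      obtain ⟨Z, hZmu, hZss, h1, h2⟩ := hdir Z₁ hZ₁mu Z₂ hZ₂mu hZ₁ss hZ₂ss
      have hrk : M.rank ⟨Z, hZmu⟩ < δ := by
        rw [← hXr]; exact rank_lt_of_ssubset hκ hZss
      exact Set.mem_biUnion hrk (mem_seq_of (h1 hαZ₁) (h2 hβZ₂) hβα)
    · exfalso
      have hwr := star_wf_rank hr12 hmu
      have hrank : δ = Order.succ (M.rank X₁) := by
        rw [← hXr]
        refine Ordinal.lift_inj.1 ?_
        rw [lift_rank hκ X, hwr, Ordinal.lift_succ, lift_rank hκ X₁, Ordinal.add_one_eq_succ]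
      have h5 : M.rank X₁ < δ := by rw [hrank]; exact Order.lt_succ _
      have h6 := hδ.succ_lt h5
      rw [← hrank] at h6
      exact lt_irrefl _ h6
  · intro β hβ
    rw [Set.mem_iUnion₂] at hβ
    obtain ⟨ξ, hξδ, hβξ⟩ := hβ
    exact museq_mono hκ hα ξ δ hξδ.le hδht hβξ

theorem museq_union (hκ : κ.IsRegular) {α : Ordinal} (hα : α < (Order.succ κ).ord) :
    (⋃ ξ ∈ Set.Iio M.ht, M.seq α ξ) = Set.Iio α := by
  apply Set.Subset.antisymm
  · exact Set.iUnion₂_subset fun ξ _ => seq_subset_Iio α ξ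
  · intro β hβ
    obtain ⟨Xa, hXa⟩ := exists_mem_of_lt (M := M) hα
    obtain ⟨Xb, hXb⟩ := exists_mem_of_lt (M := M) (lt_trans hβ hα)
    obtain ⟨V, h1, h2⟩ := directed' Xa Xb
    exact Set.mem_biUnion (rank_lt_ht hκ V) (mem_seq_of (h1 hXa) (h2 hXb) hβ)

theorem museq_card (hκ : κ.IsRegular) (α ξ : Ordinal) : (otp (M.seq α ξ)).card < κ := by
  by_cases hw : ∃ X : M.mu, M.rank X = ξ ∧ α ∈ (X : Set Ordinal)
  · obtain ⟨X, hXr, hXα⟩ := hw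
    rw [← hXr, seq_eq hκ hXα]
    exact lt_of_le_of_lt
      (Ordinal.card_le_card (otp_mono Set.inter_subset_left (obdd X))) (M.mem_small X X.2)
  · have he : M.seq α ξ = ∅ := by
      ext β
      simp only [Set.mem_empty_iff_false, iff_false]
      rintro ⟨S, ⟨X, h1, h2, rfl⟩, hβ⟩
      exact hw ⟨X, h1, h2⟩
    rw [he, otp_empty, Ordinal.card_zero]
    exact hκ.pos

theorem ht_eq (hκ : κ.IsRegular) : M.ht = κ.ord := by
  refine le_antisymm (ht_le hκ) ?_
  by_contra hc
  push_neg at hc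
  have hαΛ : κ.ord < (Order.succ κ).ord := Cardinal.ord_lt_ord.2 (Order.lt_succ κ)
  have hcov := museq_union (M := M) hκ hαΛ
  have hmk : #(Set.Iio κ.ord : Set Ordinal) = Cardinal.lift.{1} κ := by
    rw [Ordinal.mk_Iio_ordinal, Cardinal.card_ord]
  rw [← hcov] at hmk
  have hle := Cardinal.mk_biUnion_le (fun ξ => M.seq κ.ord ξ) (Set.Iio M.ht)
  rw [hmk] at hle
  have h1 : #(Set.Iio M.ht : Set Ordinal) < Cardinal.lift.{1} κ := by
    rw [Ordinal.mk_Iio_ordinal]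
    exact Cardinal.lift_lt.2 (Cardinal.lt_ord.1 hc)
  have h2 : ∀ ξ : (Set.Iio M.ht : Set Ordinal), #(M.seq κ.ord ξ) < Cardinal.lift.{1} κ := by
    intro ξ
    rw [mk_eq_lift_otp ⟨κ.ord, seq_subset_Iio _ _⟩]
    exact Cardinal.lift_lt.2 (museq_card hκ κ.ord ξ)
  have h3 := Cardinal.iSup_lt_of_isRegular (isRegular_lift hκ) h1 h2
  exact absurd hle (not_le.2 (Cardinal.mul_lt_of_lt (isRegular_lift hκ).1 h1 h3))

theorem museq_unbdd (hκ : κ.IsRegular) {α : Ordinal} (hα : α < (Order.succ κ).ord)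
    (s : Set Ordinal) (hsub : s ⊆ Set.Iio α) (hcard : (otp s).card < κ) :
    ∃ ξ < M.ht, s ⊆ M.seq α ξ := by
  obtain ⟨Xa, hXa⟩ := exists_mem_of_lt (M := M) hα
  have hZ : ∀ b : s, ∃ Z : M.mu, α ∈ (Z : Set Ordinal) ∧ (b : Ordinal) ∈ (Z : Set Ordinal) := by
    intro b
    obtain ⟨Xb, hXb⟩ := exists_mem_of_lt (M := M) (lt_trans (hsub b.2) hα)
    obtain ⟨V, h1, h2⟩ := directed' Xa Xb
    exact ⟨V, h1 hXa, h2 hXb⟩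
  choose Z hZ1 hZ2 using hZ
  obtain ⟨e, he⟩ := exists_enum (⟨α, hsub⟩ : OBdd s)
  have hξht : (⨆ i, M.rank (Z (e i))) < M.ht := by
    rw [ht_eq hκ]
    refine Ordinal.iSup_lt_ord ?_ ?_
    · rw [Cardinal.mk_toType, hκ.cof_eq]
      exact hcard
    · intro i
      exact rank_lt_ord hκ _
  refine ⟨_, hξht, ?_⟩
  intro β hβ
  obtain ⟨i, hi⟩ := he ⟨β, hβ⟩
  have hb' : β ∈ (Z (e i) : Set Ordinal) := by
    have h := hZ2 (e i)
    rwa [show ((e i : s) : Ordinal) = β from congrArg Subtype.val hi] at h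
  have hm := mem_seq_of (hZ1 (e i)) hb' (hsub hβ)
  have hle : M.rank (Z (e i)) ≤ ⨆ i, M.rank (Z (e i)) := Ordinal.le_iSup _ i
  exact museq_mono hκ hα _ _ hle hξht hm


end Lemmas

end TwoCardinal

/-- The μ-sequence at `α` is non-decreasing, continuous, covers `α`, is club in `[α]^{<κ}`,
and the height of `(μ,⊂)` is `κ`. -/
theorem museq_club (κ : Cardinal) (hκ : κ.IsRegular) (M : TwoCardinal κ)
    (α : Ordinal) (hα : α < (Order.succ κ).ord) :
    (∀ ξ η : Ordinal, ξ ≤ η → η < M.ht → M.seq α ξ ⊆ M.seq α η) ∧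
    (∀ δ : Ordinal, δ < M.ht → Order.IsSuccLimit δ → M.seq α δ = ⋃ ξ ∈ Set.Iio δ, M.seq α ξ) ∧
    (⋃ ξ ∈ Set.Iio M.ht, M.seq α ξ) = Set.Iio α ∧
    (∀ ξ, ξ < M.ht → M.seq α ξ ⊆ Set.Iio α ∧ (otp (M.seq α ξ)).card < κ) ∧
    (∀ s : Set Ordinal, s ⊆ Set.Iio α → (otp s).card < κ → ∃ ξ < M.ht, s ⊆ M.seq α ξ) ∧
    M.ht = κ.ord := by
  exact ⟨fun ξ η h1 h2 => TwoCardinal.museq_mono hκ hα ξ η h1 h2,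
    fun δ h1 h2 => TwoCardinal.museq_cont hκ hα δ h1 h2,
    TwoCardinal.museq_union hκ hα,
    fun ξ _ => ⟨TwoCardinal.seq_subset_Iio α ξ, TwoCardinal.museq_card hκ α ξ⟩,
    fun s h1 h2 => TwoCardinal.museq_unbdd hκ hα s h1 h2,
    TwoCardinal.ht_eq hκ⟩
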